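/- Assume that for every diagonal pair (D,E) of subsets of ℕⁿ the separation condition ☕(D,E) holds: there exist K_0,…,K_{n−1} with K_i ∈ F_{p(i)} such that D ∩ (A_0 × ⋯ × A_{n−1}) and E ∩ (A_0 × ⋯ × A_{n−1}) are both non-empty whenever A_i ⊆ ℕ satisfy K_i ⊆ A_i*. Then for every clopen U ⊆ X_p there is N ∈ ω with either U ∩ ℕⁿ ⊆ 𝕊ᴺ_p or 𝕋ᴺ_p ⊆ U ∩ ℕⁿ. -/

import Mathlib

/-- ℕ* : the nonprincipal ultrafilters on ℕ, with the topology inherited from βℕ. -/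
def NStar : Type := {U : Ultrafilter ℕ // (U : Filter ℕ) ≤ Filter.cofinite}

instance : TopologicalSpace NStar := instTopologicalSpaceSubtype

/-- A* : the set of nonprincipal ultrafilters containing A. -/
def AStar (A : Set ℕ) : Set NStar := {U | A ∈ U.1}

/-- The space X(F): underlying set ℕ ⊔ F. -/
def XF (F : Set (Set NStar)) : Type := ℕ ⊕ F

/-- The coarsest topology making each {n} (n ∈ ℕ) open, and each {K} ∪ A open
whenever K ∈ F, A ⊆ ℕ and K ⊆ A*. -/
instance (F : Set (Set NStar)) : TopologicalSpace (XF F) :=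
  TopologicalSpace.generateFrom
    ({S | ∃ n : ℕ, S = {Sum.inl n}} ∪
     {S | ∃ (K : F) (A : Set ℕ), (K : Set NStar) ⊆ AStar A ∧
        S = insert (Sum.inr K) (Sum.inl '' A)})

/-- D ⊆ ℕⁿ is diagonal: it is contained in no initial stripe union 𝕊ᴺ, contains
no cofinite box 𝕋ᴺ, and all coordinate projections are injective on D. -/
def Diagonal (n : ℕ) (D : Set (Fin n → ℕ)) : Prop :=
  (∀ N : ℕ, ¬ D ⊆ {x | ∃ i, x i < N}) ∧
  (∀ N : ℕ, ¬ {x : Fin n → ℕ | ∀ i, N ≤ x i} ⊆ D) ∧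
  (∀ i : Fin n, Set.InjOn (fun x => x i) D)

/-- Condition ☕(D,E): there are K_i ∈ F_{p(i)} such that D and E meet every box
A_0 × ⋯ × A_{n-1} with K_i ⊆ A_i*. -/
def Coffee (F : ℕ → Set (Set NStar)) {n : ℕ} (p : Fin n → ℕ)
    (D E : Set (Fin n → ℕ)) : Prop :=
  ∃ K : Fin n → Set NStar, (∀ i, K i ∈ F (p i)) ∧
    ∀ A : Fin n → Set ℕ, (∀ i, K i ⊆ AStar (A i)) →
      (D ∩ {x | ∀ i, x i ∈ A i}).Nonempty ∧ (E ∩ {x | ∀ i, x i ∈ A i}).Nonempty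

lemma xf_nhds (F : Set (Set NStar)) (K : F) (W : Set (XF F))
    (hW : IsOpen W) :
    Sum.inr K ∈ W →
    ∃ A : Set ℕ, (K : Set NStar) ⊆ AStar A ∧ insert (Sum.inr K) (Sum.inl '' A) ⊆ W := by
  have hW' : TopologicalSpace.GenerateOpen
      ({S | ∃ n : ℕ, S = {Sum.inl n}} ∪
       {S | ∃ (K : F) (A : Set ℕ), (K : Set NStar) ⊆ AStar A ∧
          S = insert (Sum.inr K) (Sum.inl '' A)}) W := hW
  clear hW
  induction hW' with
  | basic s hs =>
    intro hz
    rcases hs with ⟨m, rfl⟩ | ⟨K', A, hKA, rfl⟩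
    · exact absurd (Set.mem_singleton_iff.mp hz) Sum.inr_ne_inl
    · rcases Set.mem_insert_iff.mp hz with h | h
      · obtain rfl : K = K' := Sum.inr_injective h
        exact ⟨A, hKA, le_refl _⟩
      · simp at h
  | univ =>
    intro _
    refine ⟨Set.univ, ?_, Set.subset_univ _⟩
    intro x _
    exact Filter.univ_mem
  | inter s t hs ht ihs iht =>
    intro hz
    obtain ⟨A₁, hA₁, hs₁⟩ := ihs hz.1
    obtain ⟨A₂, hA₂, hs₂⟩ := iht hz.2
    refine ⟨A₁ ∩ A₂, ?_, ?_⟩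
    · intro x hx
      exact Filter.inter_mem (hA₁ hx) (hA₂ hx)
    · intro y hy
      rcases Set.mem_insert_iff.mp hy with rfl | hy'
      · exact ⟨hz.1, hz.2⟩
      · obtain ⟨m, hm, rfl⟩ := hy'
        exact ⟨hs₁ (Set.mem_insert_of_mem _ ⟨m, hm.1, rfl⟩),
               hs₂ (Set.mem_insert_of_mem _ ⟨m, hm.2, rfl⟩)⟩
  | sUnion S hS ih =>
    intro hz
    obtain ⟨s, hsS, hzs⟩ := hz
    obtain ⟨A, hA, hsub⟩ := ih s hsS hzs
    exact ⟨A, hA, hsub.trans (Set.subset_sUnion_of_mem hsS)⟩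

lemma build_diag {n : ℕ} (hn : 0 < n) (T : Set (Fin n → ℕ))
    (hT : ∀ N : ℕ, ∃ x, x ∈ T ∧ ∀ i, N ≤ x i) :
    ∃ D : Set (Fin n → ℕ), D ⊆ T ∧ Diagonal n D := by
  classical
  choose g hg1 hg2 using hT
  let d : ℕ → (Fin n → ℕ) := fun k =>
    Nat.rec (g 0) (fun _ prev => g (Finset.univ.sup prev + 2)) k
  have hdT : ∀ k, d k ∈ T := by
    intro k
    cases k with
    | zero => exact hg1 0
    | succ m => exact hg1 _
  have hstep : ∀ k i, Finset.univ.sup (d k) + 2 ≤ d (k + 1) i := by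
    intro k i; exact hg2 _ i
  have hle : ∀ k i, d k i ≤ Finset.univ.sup (d k) := fun k i =>
    Finset.le_sup (Finset.mem_univ i)
  have hmono : ∀ i, StrictMono fun k => d k i := by
    intro i
    apply strictMono_nat_of_lt_succ
    intro k
    have h1 := hstep k i
    have h2 := hle k i
    omega
  have hstep2 : ∀ k i j, d k i + 2 ≤ d (k+1) j := by
    intro k i j
    have h1 := hle k i
    have h2 := hstep k j
    omega
  have hlow : ∀ k i, k ≤ d k i := by
    intro k
    induction k with
    | zero => intro i; exact Nat.zero_le _
    | succ m ih =>
      intro i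
      have h1 := hstep2 m ⟨0, hn⟩ i
      have h2 := ih ⟨0, hn⟩
      omega
  refine ⟨Set.range d, ?_, ?_, ?_, ?_⟩
  · rintro x ⟨k, rfl⟩; exact hdT k
  · intro N hsub
    rcases hsub ⟨N, rfl⟩ with ⟨i, hi⟩
    have := hlow N i
    omega
  · intro N hsub
    have hmem : (fun _ : Fin n => d N ⟨0, hn⟩ + 1) ∈ {x : Fin n → ℕ | ∀ i, N ≤ x i} := by
      intro i
      show N ≤ d N ⟨0, hn⟩ + 1
      have := hlow N ⟨0, hn⟩
      omega
    rcases hsub hmem with ⟨k, hk⟩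
    have hk' : d k ⟨0, hn⟩ = d N ⟨0, hn⟩ + 1 := congrFun hk ⟨0, hn⟩
    rcases lt_trichotomy k N with h | h | h
    · have h3 : d k ⟨0, hn⟩ < d N ⟨0, hn⟩ := hmono ⟨0, hn⟩ h
      omega
    · subst h; omega
    · have h1 : d (N+1) ⟨0, hn⟩ ≤ d k ⟨0, hn⟩ := (hmono ⟨0, hn⟩).monotone h
      have h2 := hstep2 N ⟨0, hn⟩ ⟨0, hn⟩
      omega
  · intro i x hx y hy hxy
    obtain ⟨j, rfl⟩ := hx
    obtain ⟨l, rfl⟩ := hy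
    have : j = l := (hmono i).injective hxy
    rw [this]

lemma mem_of_boxes (F : ℕ → Set (Set NStar)) {n : ℕ} (p : Fin n → ℕ)
    (K : Fin n → Set NStar) (hK : ∀ i, K i ∈ F (p i))
    (S : Set (Fin n → ℕ)) (W : Set (∀ i : Fin n, XF (F (p i))))
    (hWc : IsClosed W)
    (hSW : ∀ x ∈ S, (fun i => (Sum.inl (x i) : XF (F (p i)))) ∈ W)
    (hSA : ∀ A : Fin n → Set ℕ, (∀ i, K i ⊆ AStar (A i)) →
      (S ∩ {x | ∀ i, x i ∈ A i}).Nonempty) :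
    (fun i => (Sum.inr ⟨K i, hK i⟩ : XF (F (p i)))) ∈ W := by
  classical
  by_contra hzW
  obtain ⟨I, u, hu, hIV⟩ := isOpen_pi_iff.mp hWc.isOpen_compl _ hzW
  choose A hA1 hA2 using
    fun (i : Fin n) (hi : i ∈ I) =>
      xf_nhds (F (p i)) ⟨K i, hK i⟩ (u i) (hu i hi).1 (hu i hi).2
  obtain ⟨x, hxS, hxA⟩ := hSA (fun i => if h : i ∈ I then A i h else Set.univ)
    (fun i => by
      by_cases h : i ∈ I
      · simpa [h] using hA1 i h
      · simp only [h, dif_neg, not_false_iff]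
        intro x _
        exact Filter.univ_mem)
  have hmem : (fun i => (Sum.inl (x i) : XF (F (p i)))) ∈ Wᶜ := by
    refine hIV fun i hi => ?_
    have hi' : i ∈ I := hi
    have hxi : x i ∈ A i hi' := by
      have := hxA i
      simpa [hi'] using this
    exact hA2 i hi' (Set.mem_insert_of_mem _ ⟨x i, hxi, rfl⟩)
  exact hmem (hSW x hxS)

/-- If ☕(D,E) holds for every p-diagonal pair, then every clopen U ⊆ X_p has, for
some N, trace on ℕⁿ either contained in 𝕊ᴺ_p or containing 𝕋ᴺ_p. -/
theorem clopen_trace_fin_or_cofin (F : ℕ → Set (Set NStar))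
    (hne : ∀ i, ∀ K ∈ F i, Set.Nonempty K) (hcl : ∀ i, ∀ K ∈ F i, IsClosed K)
    (hdisj : ∀ i, ∀ K ∈ F i, ∀ L ∈ F i, K ≠ L → Disjoint K L)
    {n : ℕ} (p : Fin n → ℕ)
    (hcoffee : ∀ D E : Set (Fin n → ℕ), Diagonal n D → Diagonal n E → Coffee F p D E)
    (U : Set (∀ i : Fin n, XF (F (p i)))) (hU : IsClopen U) :
    ∃ N : ℕ,
      (∀ x : Fin n → ℕ, (fun i => (Sum.inl (x i) : XF (F (p i)))) ∈ U → ∃ i, x i < N) ∨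
      (∀ x : Fin n → ℕ, (∀ i, N ≤ x i) →
        (fun i => (Sum.inl (x i) : XF (F (p i)))) ∈ U) := by
  classical
  by_contra hcon
  push_neg at hcon
  rcases Nat.eq_zero_or_pos n with hn | hn
  · subst hn
    obtain ⟨⟨x, hx, -⟩, ⟨y, -, hy⟩⟩ := hcon 0
    have hxy : (fun i : Fin 0 => (Sum.inl (y i) : XF (F (p i))))
             = fun i => Sum.inl (x i) := funext fun i => i.elim0
    exact hy (hxy ▸ hx)
  · obtain ⟨D, hDU, hD⟩ := build_diag hn {x | (fun i => (Sum.inl (x i) : XF (F (p i)))) ∈ U}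
      (fun N => by obtain ⟨x, hx1, hx2⟩ := (hcon N).1; exact ⟨x, hx1, hx2⟩)
    obtain ⟨E, hEU, hE⟩ := build_diag hn {x | (fun i => (Sum.inl (x i) : XF (F (p i)))) ∉ U}
      (fun N => by obtain ⟨x, hx1, hx2⟩ := (hcon N).2; exact ⟨x, hx2, hx1⟩)
    obtain ⟨K, hK, hbox⟩ := hcoffee D E hD hE
    have h1 : (fun i => (Sum.inr ⟨K i, hK i⟩ : XF (F (p i)))) ∈ U :=
      mem_of_boxes F p K hK D U hU.1 (fun x hx => hDU hx) (fun A hA => (hbox A hA).1)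
    have h2 : (fun i => (Sum.inr ⟨K i, hK i⟩ : XF (F (p i)))) ∈ Uᶜ :=
      mem_of_boxes F p K hK E Uᶜ hU.2.isClosed_compl (fun x hx => hEU hx)
        (fun A hA => (hbox A hA).2)
    exact h2 h1
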